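/- Let A be a real n×n matrix, v ∈ ℝⁿ, c ∈ ℝ, and let i, j ∈ {1,…,n} be indices with v_i ≠ 0. If A·v = c·e_j, where e_j is the j-th standard basis vector of ℝⁿ, then det(A) = ((−1)^{i+j}·c/v_i) · det(A_{J,I}), where J = {1,…,n}∖{j} and I = {1,…,n}∖{i}. -/

import Mathlib

/-- If `A·v = c·e_j` and `v_i ≠ 0`, then
`det A = ((-1)^(i+j) * c / v_i) * det (A_{J,I})` with `J = {1,…,n} \ {j}`,
`I = {1,…,n} \ {i}`. -/
theorem stmt4 {n : ℕ} (A : Matrix (Fin (n + 1)) (Fin (n + 1)) ℝ)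
    (v : Fin (n + 1) → ℝ) (c : ℝ) (i j : Fin (n + 1)) (hv : v i ≠ 0)
    (hA : A.mulVec v = c • (Pi.single j 1 : Fin (n + 1) → ℝ)) :
    A.det = ((-1) ^ ((i : ℕ) + (j : ℕ)) * c / v i)
      * (A.submatrix j.succAbove i.succAbove).det := by
  have h1 : A.adjugate.mulVec (A.mulVec v) = A.det • v := by
    rw [Matrix.mulVec_mulVec, Matrix.adjugate_mul, Matrix.smul_mulVec,
      Matrix.one_mulVec]
  rw [hA, Matrix.mulVec_smul] at h1
  have h2 := congrFun h1 i
  simp only [Pi.smul_apply, smul_eq_mul, Matrix.mulVec_single, Pi.single_eq_same,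
    mul_one] at h2
  have h3 : A.det * v i = c * A.adjugate i j := by
    rw [← h2]; simp
  rw [Matrix.adjugate_fin_succ_eq_det_submatrix] at h3
  field_simp
  rw [h3]; ring_nf
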